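/- Let p be an odd prime, m ≥ 1, and let x_1, ..., x_m be a generating set (basis) of (Z/pZ)^m. Let B_m be the multiset consisting of p−1 copies of x_1 together with the elements x_j + a·x_1 for each 2 ≤ j ≤ m and 0 ≤ a ≤ p−1. Then B_m is a valid multiset of size mp − 1: 0 ∉ B_m, and for every 1 ≤ d ≤ m, every subgroup of (Z/pZ)^m isomorphic to (Z/pZ)^d contains fewer than dp elements of B_m counted with multiplicity. -/

import Mathlib

/-- The sumset ΣA of a multiset A: all sums of submultisets of A (including the empty sum 0). -/
def sumset {G : Type*} [AddCommMonoid G] (A : Multiset G) : Set G :=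
  {x | ∃ B ≤ A, B.sum = x}

open scoped Classical in
/-- The number of elements of the multiset A (with multiplicity) lying in the subgroup H. -/
noncomputable def inCount {G : Type*} [AddCommGroup G] (A : Multiset G) (H : AddSubgroup G) : ℕ :=
  Multiset.card (A.filter (fun x => x ∈ H))

open scoped Classical

noncomputable def inCountHom {G : Type*} [AddCommGroup G] (H : AddSubgroup G) :
    Multiset G →+ ℕ where
  toFun A := inCount A H
  map_zero' := by simp [inCount]
  map_add' A B := by simp [inCount, Multiset.filter_add]

lemma inCount_sum {G : Type*} [AddCommGroup G] {ι : Type*} (s : Finset ι)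
    (f : ι → Multiset G) (H : AddSubgroup G) :
    inCount (∑ j ∈ s, f j) H = ∑ j ∈ s, inCount (f j) H :=
  map_sum (inCountHom H) f s

lemma inCount_replicate {G : Type*} [AddCommGroup G] (n : ℕ) (v : G) (H : AddSubgroup G) :
    inCount (Multiset.replicate n v) H = if v ∈ H then n else 0 := by
  by_cases hv : v ∈ H <;> simp [inCount, hv]
  · rw [Multiset.filter_eq_self.2 (fun a ha => by rwa [Multiset.eq_of_mem_replicate ha])]
    simp
  · exact (fun a (ha : a ∈ Multiset.replicate n v) => by rwa [Multiset.eq_of_mem_replicate ha])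

lemma inCount_singleton {G : Type*} [AddCommGroup G] (v : G) (H : AddSubgroup G) :
    inCount ({v} : Multiset G) H = if v ∈ H then 1 else 0 := by
  by_cases hv : v ∈ H <;> simp [inCount, Multiset.filter_singleton, hv]

def mcardHom {α : Type*} : Multiset α →+ ℕ where
  toFun := Multiset.card
  map_zero' := rfl
  map_add' := Multiset.card_add

lemma card_le_finrank_of_li {p m : ℕ} [Fact p.Prime]
    (H' : Submodule (ZMod p) (Fin m → ZMod p)) {ι : Type*} (s : Finset ι)
    (v : ι → (Fin m → ZMod p)) (hmem : ∀ j ∈ s, v j ∈ H')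
    (hli : LinearIndependent (ZMod p) (fun j : s => v j)) :
    s.card ≤ Module.finrank (ZMod p) H' := by
  haveI : NeZero p := ⟨(Fact.out : p.Prime).pos.ne'⟩
  have hw : LinearIndependent (ZMod p) (fun j : s => (⟨v j, hmem j j.2⟩ : H')) := by
    apply LinearIndependent.of_comp H'.subtype
    exact hli
  have := hw.fintype_card_le_finrank
  simpa using this

theorem stmt_15 (p : ℕ) (hp : p.Prime) (hodd : Odd p) (m : ℕ) (hm : 0 < m)
    (b : Module.Basis (Fin m) (ZMod p) (Fin m → ZMod p))
    (Bm : Multiset (Fin m → ZMod p))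
    (hBm : Bm = Multiset.replicate (p - 1) (b ⟨0, hm⟩) +
        ∑ j ∈ Finset.univ.erase (⟨0, hm⟩ : Fin m), ∑ a ∈ Finset.range p,
          ({b j + a • b ⟨0, hm⟩} : Multiset (Fin m → ZMod p))) :
    Multiset.card Bm = m * p - 1 ∧ (0 : Fin m → ZMod p) ∉ Bm ∧
      ∀ d : ℕ, 1 ≤ d → d ≤ m → ∀ H : AddSubgroup (Fin m → ZMod p),
        Nonempty (H ≃+ (Fin d → ZMod p)) → inCount Bm H < d * p := by
  haveI : Fact p.Prime := ⟨hp⟩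
  haveI : NeZero p := ⟨hp.pos.ne'⟩
  have hp2 : 2 ≤ p := hp.two_le
  set i0 : Fin m := ⟨0, hm⟩ with hi0
  have hcard_erase : (Finset.univ.erase i0).card = m - 1 := by
    rw [Finset.card_erase_of_mem (Finset.mem_univ _)]
    simp
  refine ⟨?_, ?_, ?_⟩
  · rw [hBm]
    rw [Multiset.card_add]
    rw [show (Multiset.card (∑ j ∈ Finset.univ.erase i0, ∑ a ∈ Finset.range p,
        ({b j + a • b i0} : Multiset (Fin m → ZMod p)))) = ∑ j ∈ Finset.univ.erase i0,
        Multiset.card (∑ a ∈ Finset.range p, ({b j + a • b i0} : Multiset (Fin m → ZMod p)))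
      from map_sum mcardHom _ _]
    have : ∀ j ∈ Finset.univ.erase i0,
        Multiset.card (∑ a ∈ Finset.range p, ({b j + a • b i0} : Multiset (Fin m → ZMod p))) = p := by
      intro j _
      rw [show Multiset.card (∑ a ∈ Finset.range p, ({b j + a • b i0} : Multiset (Fin m → ZMod p)))
        = ∑ a ∈ Finset.range p, Multiset.card ({b j + a • b i0} : Multiset (Fin m → ZMod p))
        from map_sum mcardHom _ _]
      simp
    rw [Finset.sum_congr rfl this, Finset.sum_const, hcard_erase,
      Multiset.card_replicate, smul_eq_mul]
    obtain ⟨k, rfl⟩ : ∃ k, m = k + 1 := ⟨m - 1, by omega⟩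
    have h5 : (k + 1) * p = k * p + p := by ring
    rw [Nat.add_sub_cancel, h5]
    omega
  · rw [hBm]
    intro h0
    rcases Multiset.mem_add.1 h0 with h | h
    · have := Multiset.eq_of_mem_replicate h
      exact b.ne_zero i0 this.symm
    · rw [Multiset.mem_sum] at h
      obtain ⟨j, hj, hj2⟩ := h
      rw [Multiset.mem_sum] at hj2
      obtain ⟨a, _, ha⟩ := hj2
      rw [Multiset.mem_singleton] at ha
      have hji : j ≠ i0 := (Finset.mem_erase.1 hj).1
      have h1 : b.repr (b j + a • b i0) j = 1 := by
        rw [map_add, map_nsmul, Module.Basis.repr_self, Module.Basis.repr_self]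
        simp [Finsupp.single_apply, Ne.symm hji]
      rw [← ha, map_zero] at h1
      exact one_ne_zero h1.symm
  · rintro d hd1 hdm H ⟨φ⟩
    set H' : Submodule (ZMod p) (Fin m → ZMod p) := AddSubgroup.toZModSubmodule p H with hH'
    have hmemH' : ∀ x : Fin m → ZMod p, x ∈ H' ↔ x ∈ H := fun x =>
      AddSubgroup.mem_toZModSubmodule p
    haveI : Fintype H' := Fintype.ofFinite _
    have hcardH : Fintype.card H' = p ^ d := by
      have e1 : H' ≃ H := Equiv.subtypeEquivRight (fun x => hmemH' x)
      calc Fintype.card H' = Nat.card H' := Nat.card_eq_fintype_card.symm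
        _ = Nat.card H := Nat.card_congr e1
        _ = Nat.card (Fin d → ZMod p) := Nat.card_congr φ.toEquiv
        _ = p ^ d := by simp [Nat.card_eq_fintype_card, ZMod.card]
    have hrank : Module.finrank (ZMod p) H' = d := by
      have h2 := Module.card_eq_pow_finrank (K := ZMod p) (V := H')
      rw [ZMod.card, hcardH] at h2
      exact Nat.pow_right_injective hp2 h2.symm
    have expand : inCount Bm H = (if b i0 ∈ H then p - 1 else 0) +
        ∑ j ∈ Finset.univ.erase i0, ∑ a ∈ Finset.range p,
          (if b j + a • b i0 ∈ H then 1 else 0) := by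
      have hadd : ∀ A B : Multiset (Fin m → ZMod p),
          inCount (A + B) H = inCount A H + inCount B H := fun A B =>
        (inCountHom H).map_add A B
      rw [hBm, hadd, inCount_replicate, inCount_sum]
      congr 1
      refine Finset.sum_congr rfl (fun j _ => ?_)
      rw [inCount_sum]
      exact Finset.sum_congr rfl (fun a _ => inCount_singleton _ _)
    by_cases hin : b i0 ∈ H
    · -- case x₁ ∈ H
      have hiff : ∀ j, ∀ a : ℕ, (b j + a • b i0 ∈ H ↔ b j ∈ H) := by
        intro j a
        constructor
        · intro h
          have := H.sub_mem h (H.nsmul_mem hin a)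
          simpa using this
        · intro h
          exact H.add_mem h (H.nsmul_mem hin a)
      set S := (Finset.univ.erase i0).filter (fun j => b j ∈ H) with hS
      have inner : ∀ j ∈ Finset.univ.erase i0,
          ∑ a ∈ Finset.range p, (if b j + a • b i0 ∈ H then 1 else 0)
            = if b j ∈ H then p else 0 := by
        intro j _
        have hcongr : ∀ a ∈ Finset.range p, (if b j + a • b i0 ∈ H then 1 else 0)
            = (if b j ∈ H then 1 else 0) := fun a _ => by rw [hiff j a]
        rw [Finset.sum_congr rfl hcongr]
        by_cases hbj : b j ∈ H <;> simp [hbj]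
      rw [expand, if_pos hin, Finset.sum_congr rfl inner, ← Finset.sum_filter, ← hS,
        Finset.sum_const, smul_eq_mul]
      have hi0S : i0 ∉ S := by
        intro h
        exact (Finset.mem_erase.1 (Finset.mem_filter.1 h).1).1 rfl
      have hSd : S.card + 1 ≤ d := by
        have hle := card_le_finrank_of_li H' (insert i0 S) b
          (by
            intro j hj
            rcases Finset.mem_insert.1 hj with rfl | hjS
            · exact (hmemH' _).2 hin
            · exact (hmemH' _).2 (Finset.mem_filter.1 hjS).2)
          (b.linearIndependent.comp _ Subtype.val_injective)
        rw [Finset.card_insert_of_notMem hi0S, hrank] at hle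
        exact hle
      have h1 : (S.card + 1) * p ≤ d * p := Nat.mul_le_mul_right p hSd
      rw [add_mul, one_mul] at h1
      calc p - 1 + S.card * p < p + S.card * p := by omega
        _ = S.card * p + p := by ring
        _ ≤ d * p := h1
    · -- case x₁ ∉ H
      set T := (Finset.univ.erase i0).filter
        (fun j => ∃ a ∈ Finset.range p, b j + a • b i0 ∈ H) with hT
      have key : ∀ (j : Fin m) (a a' : ℕ), a < p → a' < p →
          b j + a • b i0 ∈ H → b j + a' • b i0 ∈ H → a = a' := by
        intro j a a' ha ha' hm1 hm2
        by_contra hne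
        apply hin
        have hsub : ((a : ZMod p) - (a' : ZMod p)) • b i0 ∈ H' := by
          have h3 : (b j + a • b i0) - (b j + a' • b i0) ∈ H := H.sub_mem hm1 hm2
          have h4 : (b j + a • b i0) - (b j + a' • b i0)
              = ((a : ZMod p) - (a' : ZMod p)) • b i0 := by
            rw [sub_smul, Nat.cast_smul_eq_nsmul, Nat.cast_smul_eq_nsmul]
            abel
          rw [h4] at h3
          exact (hmemH' _).2 h3
        have hu : (a : ZMod p) - (a' : ZMod p) ≠ 0 := by
          intro h
          apply hne
          have : (a : ZMod p) = (a' : ZMod p) := by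
            have := sub_eq_zero.1 h
            exact this
          calc a = ((a : ZMod p)).val := (ZMod.val_cast_of_lt ha).symm
            _ = ((a' : ZMod p)).val := by rw [this]
            _ = a' := ZMod.val_cast_of_lt ha'
        have : b i0 ∈ H' := by
          have := H'.smul_mem ((a : ZMod p) - (a' : ZMod p))⁻¹ hsub
          rwa [smul_smul, inv_mul_cancel₀ hu, one_smul] at this
        exact (hmemH' _).1 this
      have inner_le : ∀ j ∈ Finset.univ.erase i0,
          ∑ a ∈ Finset.range p, (if b j + a • b i0 ∈ H then 1 else 0)
            ≤ if j ∈ T then 1 else 0 := by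
        intro j hj
        by_cases hjT : j ∈ T
        · rw [if_pos hjT, ← Finset.sum_filter, Finset.sum_const, smul_eq_mul, mul_one]
          apply Finset.card_le_one.2
          intro a haf a' haf'
          obtain ⟨ha, hma⟩ := Finset.mem_filter.1 haf
          obtain ⟨ha', hma'⟩ := Finset.mem_filter.1 haf'
          exact key j a a' (Finset.mem_range.1 ha) (Finset.mem_range.1 ha') hma hma'
        · rw [if_neg hjT]
          have : ∀ a ∈ Finset.range p, (if b j + a • b i0 ∈ H then 1 else 0) = 0 := by
            intro a ha
            rw [if_neg]
            intro hmem
            exact hjT (Finset.mem_filter.2 ⟨hj, ⟨a, ha, hmem⟩⟩)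
          rw [Finset.sum_congr rfl this]
          simp
      have choosing : ∀ j : Fin m, ∃ a : ℕ, j ∈ T → b j + a • b i0 ∈ H := by
        intro j
        by_cases hj : j ∈ T
        · obtain ⟨a, -, ha2⟩ := (Finset.mem_filter.1 hj).2
          exact ⟨a, fun _ => ha2⟩
        · exact ⟨0, fun h => absurd h hj⟩
      choose g hg using choosing
      have hTd : T.card ≤ d := by
        have hle := card_le_finrank_of_li H' T (fun j => b j + g j • b i0)
          (fun j hj => (hmemH' _).2 (hg j hj))
          ?_
        · rwa [hrank] at hle
        · rw [Fintype.linearIndependent_iff]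
          intro c hc j'
          have hj'ne : (j' : Fin m) ≠ i0 :=
            (Finset.mem_erase.1 (Finset.mem_filter.1 j'.2).1).1
          have hcc := congrArg (fun x => b.repr x (j' : Fin m)) hc
          simp only [map_sum, map_smul, map_add, map_nsmul, Module.Basis.repr_self,
            Finsupp.coe_finset_sum, Finset.sum_apply, Finsupp.coe_smul, Pi.smul_apply,
            Finsupp.coe_add, Pi.add_apply, Finsupp.coe_zero, Pi.zero_apply,
            map_zero] at hcc
          rw [← hcc]
          rw [Finset.sum_congr rfl (fun j _ => ?_)] -- massage each term
          · rw [Finset.sum_ite_eq' Finset.univ j' c]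
            simp
          · rw [Finsupp.single_apply, Finsupp.single_apply, if_neg (Ne.symm hj'ne)]
            by_cases hjj : j = j'
            · subst hjj
              simp
            · rw [if_neg (fun h => hjj (Subtype.ext h))]
              simp [hjj]
      rw [expand, if_neg hin, zero_add]
      have hsum : ∑ j ∈ Finset.univ.erase i0, ∑ a ∈ Finset.range p,
          (if b j + a • b i0 ∈ H then 1 else 0) ≤ T.card := by
        calc _ ≤ ∑ j ∈ Finset.univ.erase i0, (if j ∈ T then 1 else 0) :=
              Finset.sum_le_sum inner_le
          _ = T.card := by
              rw [← Finset.sum_filter, Finset.sum_const, smul_eq_mul, mul_one,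
                Finset.filter_mem_eq_inter,
                Finset.inter_eq_right.2 (Finset.filter_subset _ _)]
      have hdp : d < d * p := by
        have := Nat.mul_le_mul_left d hp2
        omega
      omega
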